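/- Let K be a positive integer, let T > 0, set ω₀ = 2π/T, and let N ≥ 2K + 2 be an integer. Let 0 ≤ t₁ < t₂ < ⋯ < t_N < T be real numbers. Then the matrix B ∈ ℂ^{(N−1)×(2K)} defined by B[n, k] = e^{i k ω₀ t_{n+1}} − e^{i k ω₀ t_n} (rows indexed by n = 1, …, N−1, columns by k ∈ {−K, …, −1, 1, …, K}) has full column rank; that is, the only vector x ∈ ℂ^{2K} with B x = 0 is x = 0. -/
import Mathlib

open Polynomial Complex Finset in
/-- **Theorem 3 (FRI-TEM).** The IF-TEM measurement matrix `B` (excluding the zero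
frequency) has full column rank when `N ≥ 2K + 2`. The column index `j : Fin (2K)`
corresponds to the frequency `k = j - K` for `j < K` (i.e. `k ∈ {-K,…,-1}`) and to
`k = j - K + 1` for `j ≥ K` (i.e. `k ∈ {1,…,K}`). -/
theorem matrixB_full_column_rank
    (K : ℕ) (hK : 0 < K) (T : ℝ) (hT : 0 < T)
    (N : ℕ) (hN : 2 * K + 2 ≤ N)
    (t : Fin N → ℝ) (ht_mono : StrictMono t)
    (ht_nonneg : ∀ n, 0 ≤ t n) (ht_lt : ∀ n, t n < T)
    (B : Matrix (Fin (N - 1)) (Fin (2 * K)) ℂ)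
    (hB : ∀ (n : Fin (N - 1)) (j : Fin (2 * K)),
      B n j =
        Complex.exp (Complex.I
            * (((if (j : ℕ) < K then (j : ℤ) - (K : ℤ) else (j : ℤ) - (K : ℤ) + 1) : ℤ) : ℂ)
            * ((2 * Real.pi / T : ℝ) : ℂ)
            * ((t ⟨(n : ℕ) + 1, by have := n.isLt; omega⟩ : ℝ) : ℂ))
        - Complex.exp (Complex.I
            * (((if (j : ℕ) < K then (j : ℤ) - (K : ℤ) else (j : ℤ) - (K : ℤ) + 1) : ℤ) : ℂ)
            * ((2 * Real.pi / T : ℝ) : ℂ)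
            * ((t ⟨(n : ℕ), by have := n.isLt; omega⟩ : ℝ) : ℂ))) :
    ∀ x : Fin (2 * K) → ℂ, B.mulVec x = 0 → x = 0 := by
  intro x hx
  have hN0 : 0 < N := by omega
  set ω : ℝ := 2 * Real.pi / T with hωdef
  have hωpos : 0 < ω := by rw [hωdef]; positivity
  set k : Fin (2 * K) → ℤ :=
    fun j => if (j : ℕ) < K then (j : ℤ) - (K : ℤ) else (j : ℤ) - (K : ℤ) + 1 with hkdef
  have hB' : ∀ (n : Fin (N - 1)) (j : Fin (2 * K)),
      B n j =
        Complex.exp (Complex.I * ((k j : ℤ) : ℂ) * (ω : ℂ)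
          * ((t ⟨(n : ℕ) + 1, by have := n.isLt; omega⟩ : ℝ) : ℂ))
      - Complex.exp (Complex.I * ((k j : ℤ) : ℂ) * (ω : ℂ)
          * ((t ⟨(n : ℕ), by have := n.isLt; omega⟩ : ℝ) : ℂ)) := hB
  set G : Fin N → ℂ :=
    fun n => ∑ j, x j * Complex.exp (Complex.I * ((k j : ℤ) : ℂ) * (ω : ℂ) * ((t n : ℝ) : ℂ))
    with hGdef
  have hstep : ∀ (i : ℕ) (h : i + 1 < N), G ⟨i + 1, h⟩ = G ⟨i, Nat.lt_of_succ_lt h⟩ := by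
    intro i h
    have hi : i < N - 1 := by omega
    have h0 := congrFun hx ⟨i, hi⟩
    simp only [Matrix.mulVec, dotProduct, Pi.zero_apply] at h0
    have hdiff : G ⟨i + 1, h⟩ - G ⟨i, Nat.lt_of_succ_lt h⟩
        = ∑ j, B ⟨i, hi⟩ j * x j := by
      simp only [hGdef]
      rw [← Finset.sum_sub_distrib]
      refine Finset.sum_congr rfl fun j _ => ?_
      rw [hB' ⟨i, hi⟩ j]
      ring
    have h1 : G ⟨i + 1, h⟩ - G ⟨i, Nat.lt_of_succ_lt h⟩ = 0 := by rw [hdiff, h0]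
    exact sub_eq_zero.mp h1
  have hconst : ∀ n : Fin N, G n = G ⟨0, hN0⟩ := by
    intro n
    obtain ⟨n, hn⟩ := n
    induction n with
    | zero => rfl
    | succ m ih => exact (hstep m hn).trans (ih (Nat.lt_of_succ_lt hn))
  set c : ℂ := G ⟨0, hN0⟩ with hcdef
  -- the distinct nodes on the unit circle
  set z : Fin N → ℂ := fun n => Complex.exp (Complex.I * (ω : ℂ) * ((t n : ℝ) : ℂ)) with hzdef
  have hz_inj : Function.Injective z := by
    intro a b hab
    simp only [hzdef] at hab
    rw [Complex.exp_eq_exp_iff_exists_int] at hab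
    obtain ⟨m, hm⟩ := hab
    have h2 : ((ω * t a : ℝ) : ℂ) = ((ω * t b + m * (2 * Real.pi) : ℝ) : ℂ) := by
      apply mul_left_cancel₀ Complex.I_ne_zero
      push_cast
      linear_combination hm
    have h3 : ω * t a = ω * t b + m * (2 * Real.pi) := by exact_mod_cast h2
    have hωT : ω * T = 2 * Real.pi := by
      rw [hωdef]; field_simp
    have h4 : t a - t b = m * T := by
      have : ω * (t a - t b) = (m : ℝ) * (ω * T) := by rw [hωT]; linarith
      have h5 : ω * (t a - t b) = ω * ((m : ℝ) * T) := by linarith [this]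
      have := mul_left_cancel₀ (ne_of_gt hωpos) h5
      linarith
    have hm0 : m = 0 := by
      by_contra hm0
      have h1T : (1 : ℝ) ≤ |(m : ℝ)| := by
        rw [← Int.cast_abs]
        exact_mod_cast Int.one_le_abs hm0
      have : |t a - t b| < T := by
        rw [abs_lt]
        constructor <;>
          [linarith [ht_nonneg a, ht_nonneg b, ht_lt a, ht_lt b];
           linarith [ht_nonneg a, ht_nonneg b, ht_lt a, ht_lt b]]
      rw [h4, abs_mul, abs_of_pos hT] at this
      nlinarith
    have : t a = t b := by rw [hm0] at h4; push_cast at h4; linarith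
    exact ht_mono.injective this
  -- exponents as naturals
  set μ : Fin (2 * K) → ℕ := fun j => if (j : ℕ) < K then (j : ℕ) else (j : ℕ) + 1 with hμdef
  have hμk : ∀ j, (μ j : ℤ) = k j + K := by
    intro j
    simp only [hμdef, hkdef]
    split <;> push_cast <;> ring
  have hμ_lt : ∀ j, μ j ≤ 2 * K := by
    intro j
    simp only [hμdef]
    have := j.isLt
    split <;> omega
  have hμ_ne : ∀ j, μ j ≠ K := by
    intro j
    simp only [hμdef]
    split <;> omega
  have hμ_inj : Function.Injective μ := by
    intro a b hab
    simp only [hμdef] at hab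
    have ha := a.isLt; have hb := b.isLt
    apply Fin.ext
    split at hab <;> split at hab <;> omega
  -- the polynomial
  set P : Polynomial ℂ :=
    (∑ j, Polynomial.C (x j) * Polynomial.X ^ (μ j)) - Polynomial.C c * Polynomial.X ^ K
    with hPdef
  have hPdeg : P.natDegree ≤ 2 * K := by
    rw [hPdef]
    refine le_trans (Polynomial.natDegree_sub_le _ _) (max_le ?_ ?_)
    · refine Polynomial.natDegree_sum_le_of_forall_le _ _ fun j _ => ?_
      exact le_trans (Polynomial.natDegree_C_mul_X_pow_le _ _) (hμ_lt j)
    · exact le_trans (Polynomial.natDegree_C_mul_X_pow_le _ _) (by omega)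
  have heval : ∀ n : Fin N, P.eval (z n) = 0 := by
    intro n
    have hzpow : ∀ j, (z n) ^ (μ j)
        = Complex.exp (Complex.I * ((K : ℕ) : ℂ) * (ω : ℂ) * ((t n : ℝ) : ℂ))
          * Complex.exp (Complex.I * ((k j : ℤ) : ℂ) * (ω : ℂ) * ((t n : ℝ) : ℂ)) := by
      intro j
      rw [hzdef, ← Complex.exp_nat_mul, ← Complex.exp_add]
      congr 1
      have : ((μ j : ℕ) : ℂ) = ((k j : ℤ) : ℂ) + ((K : ℕ) : ℂ) := by
        exact_mod_cast congrArg (fun r : ℤ => (r : ℂ)) (hμk j)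
      rw [this]
      ring
    have hzK : (z n) ^ K
        = Complex.exp (Complex.I * ((K : ℕ) : ℂ) * (ω : ℂ) * ((t n : ℝ) : ℂ)) := by
      rw [hzdef, ← Complex.exp_nat_mul]
      congr 1
      ring
    simp only [hPdef, Polynomial.eval_sub, Polynomial.eval_finset_sum, Polynomial.eval_mul,
      Polynomial.eval_pow, Polynomial.eval_C, Polynomial.eval_X]
    calc (∑ j, x j * z n ^ μ j) - c * z n ^ K
        = Complex.exp (Complex.I * ((K : ℕ) : ℂ) * (ω : ℂ) * ((t n : ℝ) : ℂ)) * (G n - c) := by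
          rw [hGdef]
          simp only [hzpow, hzK]
          rw [mul_sub, Finset.mul_sum]
          refine congrArg₂ (· - ·) ?_ (mul_comm _ _)
          exact Finset.sum_congr rfl fun j _ => by ring
      _ = 0 := by rw [hconst n, sub_self, mul_zero]
  have hP0 : P = 0 := by
    refine Polynomial.eq_zero_of_natDegree_lt_card_of_eval_eq_zero P hz_inj heval ?_
    simp only [Fintype.card_fin]
    omega
  -- extract coefficients
  funext j
  have hcoeff : P.coeff (μ j) = x j := by
    simp only [hPdef, Polynomial.coeff_sub, Polynomial.finset_sum_coeff,
      Polynomial.coeff_C_mul, Polynomial.coeff_X_pow, mul_ite, mul_one, mul_zero]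
    rw [if_neg (hμ_ne j), sub_zero]
    rw [Finset.sum_eq_single j (fun b _ hb => by
        rw [if_neg (fun h => hb (hμ_inj h.symm))]) (fun h => absurd (Finset.mem_univ j) h)]
    rw [if_pos rfl]
  rw [hP0, Polynomial.coeff_zero] at hcoeff
  exact hcoeff.symm
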